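/- For every real h with 0 < h < 2 and every dimension d ≥ 1, the sum over nonzero integer vectors satisfies Σ_{ν ∈ ℤ^d \ {0}} e^{-|ν| h/2} < (8/h)^d, where |ν| = Σ_{i=1}^d |ν_i|. -/

import Mathlib

/-- `|ν| = Σ_i |ν_i|`, the ℓ¹ norm of an integer vector. -/
noncomputable def l1 {d : ℕ} (ν : Fin d → ℤ) : ℝ := ∑ i, |(ν i : ℝ)|

lemma hasSum_one_dim (t : ℝ) (ht : 0 < t) :
    HasSum (fun n : ℤ => Real.exp (-|(n : ℝ)| * t))
      ((1 - Real.exp (-t))⁻¹ + Real.exp (-t) * (1 - Real.exp (-t))⁻¹) := by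
  set r := Real.exp (-t) with hr
  have hr0 : 0 ≤ r := (Real.exp_pos _).le
  have hr1 : r < 1 := Real.exp_lt_one_iff.mpr (by linarith)
  have hgeo : HasSum (fun n : ℕ => r ^ n) (1 - r)⁻¹ := hasSum_geometric_of_lt_one hr0 hr1
  have e1 : (fun n : ℕ => Real.exp (-|((n : ℤ) : ℝ)| * t)) = fun n : ℕ => r ^ n := by
    funext n
    rw [hr, ← Real.exp_nat_mul]
    congr 1
    push_cast
    rw [abs_of_nonneg (by positivity)]
    ring
  have h1 : HasSum (fun n : ℕ => Real.exp (-|((n : ℤ) : ℝ)| * t)) (1 - r)⁻¹ := by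
    rw [e1]; exact hgeo
  have e2 : (fun n : ℕ => Real.exp (-|((-(n + 1) : ℤ) : ℝ)| * t))
      = fun n : ℕ => r * r ^ n := by
    funext n
    rw [hr, ← Real.exp_nat_mul, ← Real.exp_add]
    congr 1
    push_cast
    rw [abs_of_nonpos (neg_nonpos.mpr (by positivity))]
    ring
  have h2 : HasSum (fun n : ℕ => Real.exp (-|((-(n + 1) : ℤ) : ℝ)| * t))
      (r * (1 - r)⁻¹) := by
    rw [e2]; exact hgeo.mul_left r
  exact HasSum.of_nat_of_neg_add_one (f := fun n : ℤ => Real.exp (-|(n : ℝ)| * t)) h1 h2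

lemma hasSum_pi (t : ℝ) (S : ℝ)
    (hS : HasSum (fun n : ℤ => Real.exp (-|(n : ℝ)| * t)) S) (d : ℕ) :
    HasSum (fun ν : Fin d → ℤ => Real.exp (-(∑ i, |((ν i : ℝ))|) * t)) (S ^ d) := by
  induction d with
  | zero =>
      have e : (fun ν : Fin 0 → ℤ => Real.exp (-(∑ i, |((ν i : ℝ))|) * t))
          = fun _ => (1 : ℝ) := by
        funext ν; simp
      rw [e, pow_zero]
      simpa using hasSum_fintype (fun _ : Fin 0 → ℤ => (1 : ℝ))
  | succ n ih =>
      have hsummable := hS.summable.mul_of_nonneg ih.summable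
          (fun _ => (Real.exp_pos _).le) (fun _ => (Real.exp_pos _).le)
      have hmul := hS.mul ih hsummable
      set e := (Fin.consEquiv (fun _ : Fin (n + 1) => ℤ)) with he
      have key : ((fun ν : Fin (n + 1) → ℤ => Real.exp (-(∑ i, |((ν i : ℝ))|) * t)) ∘ e)
          = fun p : ℤ × (Fin n → ℤ) =>
            Real.exp (-|(p.1 : ℝ)| * t) * Real.exp (-(∑ i, |((p.2 i : ℝ))|) * t) := by
        funext p
        simp only [Function.comp, he, Fin.consEquiv_apply]
        rw [← Real.exp_add, Fin.sum_univ_succ]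
        simp only [Fin.cons_zero, Fin.cons_succ]
        congr 1
        ring
      have := (e.hasSum_iff).mp (by rw [key]; exact hmul)
      rw [pow_succ, mul_comm (S ^ n) S]
      exact this

/-- for `0 < h < 2` and `d ≥ 1`,
`Σ_{ν ∈ ℤ^d \ {0}} e^{-|ν| h/2} < (8/h)^d`. -/
theorem sum_exp_l1_lt (d : ℕ) (hd : 1 ≤ d) (h : ℝ) (h0 : 0 < h) (h2 : h < 2) :
    Summable (fun ν : {ν : Fin d → ℤ // ν ≠ 0} => Real.exp (-(l1 ν.1) * h / 2)) ∧
    ∑' ν : {ν : Fin d → ℤ // ν ≠ 0}, Real.exp (-(l1 ν.1) * h / 2) < (8 / h) ^ d := by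
  have ht : 0 < h / 2 := by positivity
  have ht1 : h / 2 < 1 := by linarith
  set r := Real.exp (-(h / 2)) with hrdef
  have hr0 : 0 ≤ r := (Real.exp_pos _).le
  have hr1 : r < 1 := Real.exp_lt_one_iff.mpr (by linarith)
  set S : ℝ := (1 - r)⁻¹ + r * (1 - r)⁻¹ with hSdef
  have hS1 : HasSum (fun n : ℤ => Real.exp (-|(n : ℝ)| * (h / 2))) S :=
    hasSum_one_dim (h / 2) ht
  have h1r : 0 < 1 - r := by linarith
  have hr_le : r * (1 + h / 2) ≤ 1 := by
    have hle := Real.add_one_le_exp (h / 2)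
    have hexp : r * Real.exp (h / 2) = 1 := by
      rw [hrdef, ← Real.exp_add]; simp
    nlinarith [Real.exp_pos (h / 2)]
  have hSnonneg : 0 ≤ S := by
    have : 0 < (1 - r)⁻¹ := inv_pos.mpr h1r
    positivity
  have hSle : S ≤ 4 / (h / 2) := by
    have hform : S = (1 + r) / (1 - r) := by
      rw [hSdef]; field_simp; try ring
    rw [hform, div_le_div_iff₀ h1r ht]
    nlinarith [hr_le, mul_pos ht (show (0:ℝ) < 2 - h / 2 by linarith)]
  -- full sum over ℤ^d
  have hfull : HasSum (fun ν : Fin d → ℤ => Real.exp (-(l1 ν) * h / 2)) (S ^ d) := by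
    have hp := hasSum_pi (h / 2) S hS1 d
    have e : (fun ν : Fin d → ℤ => Real.exp (-(∑ i, |((ν i : ℝ))|) * (h / 2)))
        = fun ν : Fin d → ℤ => Real.exp (-(l1 ν) * h / 2) := by
      funext ν
      simp only [l1]
      congr 1
      ring
    rwa [e] at hp
  -- subtract the ν = 0 term
  have hzero : HasSum (fun ν : Fin d → ℤ =>
      if ν = 0 then Real.exp (-(l1 ν) * h / 2) else 0) (1 : ℝ) := by
    have hite := hasSum_ite_eq (0 : Fin d → ℤ) (1 : ℝ)
    have e : (fun ν : Fin d → ℤ => if ν = 0 then (1 : ℝ) else 0)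
        = fun ν : Fin d → ℤ => if ν = 0 then Real.exp (-(l1 ν) * h / 2) else 0 := by
      funext ν
      by_cases hν : ν = 0
      · subst hν; simp [l1]
      · simp [hν]
    rwa [e] at hite
  have hdiff : HasSum (fun ν : Fin d → ℤ =>
      if ν = 0 then 0 else Real.exp (-(l1 ν) * h / 2)) (S ^ d - 1) := by
    have hs := hfull.sub hzero
    have e : (fun ν : Fin d → ℤ =>
        Real.exp (-(l1 ν) * h / 2) - if ν = 0 then Real.exp (-(l1 ν) * h / 2) else 0)
        = fun ν : Fin d → ℤ => if ν = 0 then 0 else Real.exp (-(l1 ν) * h / 2) := by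
      funext ν
      by_cases hν : ν = 0 <;> simp [hν]
    rwa [e] at hs
  have hsub : HasSum (fun ν : {ν : Fin d → ℤ // ν ≠ 0} => Real.exp (-(l1 ν.1) * h / 2))
      (S ^ d - 1) := by
    have hsupp : Function.support (fun ν : Fin d → ℤ =>
        if ν = 0 then 0 else Real.exp (-(l1 ν) * h / 2)) ⊆ {ν : Fin d → ℤ | ν ≠ 0} := by
      intro ν hν
      simp only [Function.mem_support] at hν
      intro h0'
      exact hν (by simp [h0'])
    have hres := (hasSum_subtype_iff_of_support_subset hsupp).mpr hdiff
    have e : (fun ν : {ν : Fin d → ℤ // ν ≠ 0} => Real.exp (-(l1 ν.1) * h / 2))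
        = ((fun ν : Fin d → ℤ => if ν = 0 then 0 else Real.exp (-(l1 ν) * h / 2)) ∘ Subtype.val) := by
      funext ν
      simp only [Function.comp_apply]
      rw [if_neg ν.2]
    rw [e]; exact hres
  refine ⟨hsub.summable, ?_⟩
  rw [hsub.tsum_eq]
  have h8 : (8 : ℝ) / h = 4 / (h / 2) := by
    field_simp
    ring
  rw [h8]
  have hpow : S ^ d ≤ (4 / (h / 2)) ^ d := pow_le_pow_left₀ hSnonneg hSle d
  linarith
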